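/- Let N ≥ 1, α ∈ (0,N), p > 0, γ < 0, τ ≥ 0, s > 1, c > 0 with α + pγ < 0 and p|γ| > N. Suppose 0 ≤ f(y) ≤ c|y|^γ log^τ(s|y|) for |y| ≥ 1. Then there exists C > 0 such that for all |x| ≥ 1: ∫_{|y|≥1} f(y)^p/|x-y|^{N-α} dy ≤ C |x|^{α-N}. -/

import Mathlib

open MeasureTheory

open MeasureTheory Metric Set

lemma auxLog (s e δ : ℝ) (hs : 1 < s) (he : 0 ≤ e) (hδ : 0 < δ) :
    ∃ M : ℝ, 0 < M ∧ ∀ t : ℝ, 1 ≤ t → Real.log (s * t) ^ e ≤ M * t ^ δ := by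
  set ε : ℝ := δ / (e + 1) with hεdef
  have hε0 : 0 < ε := div_pos hδ (by linarith)
  have hs0 : (0:ℝ) < s := by linarith
  refine ⟨(s ^ ε / ε) ^ e, by positivity, fun t ht => ?_⟩
  have ht0 : (0:ℝ) < t := lt_of_lt_of_le one_pos ht
  have hst : (1:ℝ) ≤ s * t := by nlinarith
  have h1 : Real.log (s * t) ≤ (s * t) ^ ε / ε :=
    Real.log_le_rpow_div (by positivity) hε0
  have h2 : Real.log (s * t) ^ e ≤ ((s * t) ^ ε / ε) ^ e :=
    Real.rpow_le_rpow (Real.log_nonneg hst) h1 he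
  have h3 : ((s * t) ^ ε / ε) ^ e = (s ^ ε / ε) ^ e * t ^ (ε * e) := by
    rw [Real.mul_rpow hs0.le ht0.le, mul_div_right_comm,
      Real.mul_rpow (by positivity) (by positivity), ← Real.rpow_mul ht0.le]
  have hεe : ε * e ≤ δ := by
    rw [hεdef, div_mul_eq_mul_div, div_le_iff₀ (by linarith : (0:ℝ) < e + 1)]
    nlinarith
  have h4 : t ^ (ε * e) ≤ t ^ δ := Real.rpow_le_rpow_of_exponent_le ht hεe
  calc Real.log (s * t) ^ e ≤ (s ^ ε / ε) ^ e * t ^ (ε * e) := by rw [← h3]; exact h2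
    _ ≤ (s ^ ε / ε) ^ e * t ^ δ := by
        exact mul_le_mul_of_nonneg_left h4 (by positivity)

lemma auxPow (s a e q : ℝ) (hs : 1 < s) (he : 0 ≤ e) (hq : a < q) :
    ∃ M : ℝ, 0 < M ∧ ∀ t : ℝ, 1 ≤ t → t ^ a * Real.log (s * t) ^ e ≤ M * t ^ q := by
  obtain ⟨M, hM, h⟩ := auxLog s e (q - a) hs he (by linarith)
  refine ⟨M, hM, fun t ht => ?_⟩
  have ht0 : (0:ℝ) < t := lt_of_lt_of_le one_pos ht
  calc t ^ a * Real.log (s * t) ^ e ≤ t ^ a * (M * t ^ (q - a)) :=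
        mul_le_mul_of_nonneg_left (h t ht) (Real.rpow_nonneg ht0.le a)
    _ = M * (t ^ a * t ^ (q - a)) := by ring
    _ = M * t ^ q := by rw [← Real.rpow_add ht0]; congr 1; ring
open scoped ENNReal NNReal

lemma auxBall (N : ℕ) (hN : 1 ≤ N) (α : ℝ) (hα0 : 0 < α) (hαN : α < N) :
    ∃ D : ℝ≥0∞, D ≠ ⊤ ∧ ∀ (x : EuclideanSpace ℝ (Fin N)) (R : ℝ), 0 < R →
      ∫⁻ y in ball x R, ENNReal.ofReal (‖x - y‖ ^ (α - N)) ≤ D * ENNReal.ofReal (R ^ α) := by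
  haveI : Nonempty (Fin N) := ⟨⟨0, hN⟩⟩
  set E := EuclideanSpace ℝ (Fin N)
  haveI : Nontrivial E := inferInstance
  set v : ℝ≥0∞ := volume (ball (0 : E) 1) with hvdef
  have hv : v ≠ ⊤ := measure_ball_lt_top.ne
  set r : ℝ≥0∞ := ENNReal.ofReal ((2:ℝ) ^ (-α)) with hrdef
  have hr1 : r < 1 := by
    rw [hrdef, ← ENNReal.ofReal_one]
    exact ENNReal.ofReal_lt_ofReal_iff one_pos |>.2
      (Real.rpow_lt_one_of_one_lt_of_neg one_lt_two (by linarith))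
  have hgeo : (∑' k : ℕ, r ^ k) = (1 - r)⁻¹ := ENNReal.tsum_geometric r
  have hgeo_ne : (1 - r)⁻¹ ≠ ⊤ := ENNReal.inv_ne_top.2 (tsub_pos_of_lt hr1).ne'
  refine ⟨ENNReal.ofReal ((2:ℝ) ^ ((N:ℝ) - α)) * (1 - r)⁻¹ * v, ?_, ?_⟩
  · exact ENNReal.mul_ne_top (ENNReal.mul_ne_top ENNReal.ofReal_ne_top hgeo_ne) hv
  intro x R hR
  set A : ℕ → Set E := fun k => {y | R / 2 ^ (k + 1) ≤ ‖x - y‖} ∩ {y | ‖x - y‖ < R / 2 ^ k}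
    with hAdef
  have hA_meas : ∀ k, MeasurableSet (A k) := by
    intro k
    apply MeasurableSet.inter
    · exact measurableSet_le measurable_const ((measurable_const.sub measurable_id').norm)
    · exact measurableSet_lt ((measurable_const.sub measurable_id').norm) measurable_const
  have hcover : ball x R ⊆ {x} ∪ ⋃ k, A k := by
    intro y hy
    rcases eq_or_ne y x with h | h
    · exact Or.inl (by simp [h])
    have hd : 0 < ‖x - y‖ := by
      rw [norm_pos_iff, sub_ne_zero]; exact (Ne.symm h)
    have hyR : ‖x - y‖ < R := by
      rw [mem_ball, dist_comm, dist_eq_norm] at hy; exact hy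
    have hex : ∃ k : ℕ, R / 2 ^ (k + 1) ≤ ‖x - y‖ := by
      obtain ⟨n, hn⟩ := pow_unbounded_of_one_lt (R / ‖x - y‖) (one_lt_two (α := ℝ))
      refine ⟨n, ?_⟩
      rw [div_le_iff₀ (by positivity)]
      rw [div_lt_iff₀ hd] at hn
      have h2n : (2:ℝ) ^ n ≤ 2 ^ (n + 1) :=
        pow_le_pow_right₀ (by norm_num : (1:ℝ) ≤ 2) (Nat.le_succ n)
      nlinarith [hd.le]
    right
    refine mem_iUnion.2 ⟨Nat.find hex, Nat.find_spec hex, ?_⟩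
    show ‖x - y‖ < R / 2 ^ (Nat.find hex)
    rcases Nat.eq_zero_or_pos (Nat.find hex) with h0 | hpos
    · rw [h0]; simpa using hyR
    · obtain ⟨m, hm⟩ := Nat.exists_eq_succ_of_ne_zero hpos.ne'
      have := Nat.find_min hex (by omega : m < Nat.find hex)
      rw [hm]
      push_neg at this
      exact this
  have hstep : ∀ k : ℕ, ∫⁻ y in A k, ENNReal.ofReal (‖x - y‖ ^ (α - N)) ≤
      (ENNReal.ofReal ((2:ℝ) ^ ((N:ℝ) - α)) * r ^ k) * (ENNReal.ofReal (R ^ α) * v) := by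
    intro k
    have hkey : (R / 2 ^ (k + 1)) ^ (α - (N:ℝ)) * (R / 2 ^ k) ^ ((N:ℝ)) =
        (2:ℝ) ^ ((N:ℝ) - α) * ((2:ℝ) ^ (-α)) ^ k * R ^ α := by
      have h2 : (0:ℝ) < 2 := two_pos
      rw [Real.div_rpow hR.le (by positivity), Real.div_rpow hR.le (by positivity),
        div_mul_div_comm, ← Real.rpow_add hR,
        ← Real.rpow_natCast (2:ℝ) (k + 1), ← Real.rpow_natCast (2:ℝ) k,
        ← Real.rpow_mul h2.le, ← Real.rpow_mul h2.le, ← Real.rpow_add h2,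
        ← Real.rpow_natCast ((2:ℝ) ^ (-α)) k, ← Real.rpow_mul h2.le, ← Real.rpow_add h2]
      rw [show α - (N:ℝ) + (N:ℝ) = α by ring]
      rw [show ((k + 1 : ℕ) : ℝ) * (α - (N:ℝ)) + ((k : ℕ) : ℝ) * (N:ℝ) =
          -(((N:ℝ) - α) + -α * (k:ℕ)) by push_cast; ring]
      rw [Real.rpow_neg h2.le, div_eq_mul_inv, inv_inv, mul_comm]
    have hsub : A k ⊆ ball x (R / 2 ^ k) := by
      intro y hy
      rw [mem_ball, dist_comm, dist_eq_norm]
      exact hy.2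
    calc ∫⁻ y in A k, ENNReal.ofReal (‖x - y‖ ^ (α - N)) ≤
        ∫⁻ _ in A k, ENNReal.ofReal ((R / 2 ^ (k + 1)) ^ (α - N)) := by
          refine setLIntegral_mono' (hA_meas k) fun y hy => ?_
          exact ENNReal.ofReal_le_ofReal
            (Real.rpow_le_rpow_of_nonpos (by positivity) hy.1 (by linarith))
      _ = ENNReal.ofReal ((R / 2 ^ (k + 1)) ^ (α - N)) * volume (A k) :=
          setLIntegral_const _ _
      _ ≤ ENNReal.ofReal ((R / 2 ^ (k + 1)) ^ (α - N)) *
          (ENNReal.ofReal ((R / 2 ^ k) ^ ((N:ℝ))) * v) := by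
          gcongr
          calc volume (A k) ≤ volume (ball x (R / 2 ^ k)) := measure_mono hsub
            _ = ENNReal.ofReal ((R / 2 ^ k) ^ (Module.finrank ℝ E)) * v :=
                Measure.addHaar_ball volume x (by positivity)
            _ = ENNReal.ofReal ((R / 2 ^ k) ^ ((N:ℝ))) * v := by
                rw [← Real.rpow_natCast (R / 2 ^ k) (Module.finrank ℝ E)]
                congr 2
                simp [E, finrank_euclideanSpace]
      _ = ENNReal.ofReal ((R / 2 ^ (k + 1)) ^ (α - N) * (R / 2 ^ k) ^ ((N:ℝ))) * v := by
          rw [← mul_assoc, ← ENNReal.ofReal_mul (by positivity)]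
      _ = (ENNReal.ofReal ((2:ℝ) ^ ((N:ℝ) - α)) * r ^ k) * (ENNReal.ofReal (R ^ α) * v) := by
          rw [hkey, ENNReal.ofReal_mul (by positivity), ENNReal.ofReal_mul (by positivity),
            ENNReal.ofReal_pow (by positivity), ← hrdef]
          ring
  calc ∫⁻ y in ball x R, ENNReal.ofReal (‖x - y‖ ^ (α - N)) ≤
      ∫⁻ y in {x} ∪ ⋃ k, A k, ENNReal.ofReal (‖x - y‖ ^ (α - N)) :=
        lintegral_mono_set hcover
    _ ≤ (∫⁻ y in {x}, ENNReal.ofReal (‖x - y‖ ^ (α - N))) +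
        ∫⁻ y in ⋃ k, A k, ENNReal.ofReal (‖x - y‖ ^ (α - N)) := lintegral_union_le _ _ _
    _ ≤ 0 + ∑' k, ∫⁻ y in A k, ENNReal.ofReal (‖x - y‖ ^ (α - N)) := by
        gcongr
        · rw [Measure.restrict_singleton, measure_singleton]
          simp
        · exact lintegral_iUnion_le _ _
    _ ≤ 0 + ∑' k, (ENNReal.ofReal ((2:ℝ) ^ ((N:ℝ) - α)) * r ^ k) *
        (ENNReal.ofReal (R ^ α) * v) := by
        gcongr with k
        exact hstep k
    _ = ENNReal.ofReal ((2:ℝ) ^ ((N:ℝ) - α)) * (1 - r)⁻¹ * v * ENNReal.ofReal (R ^ α) := by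
        rw [zero_add]
        rw [ENNReal.tsum_mul_right, ENNReal.tsum_mul_left, hgeo]
        ring


/-- If 0 ≤ f(y) ≤ c‖y‖^γ log^τ(s‖y‖) for ‖y‖ ≥ 1, with α+pγ<0 and p|γ|>N, then
∫_{‖y‖≥1} f(y)^p/‖x-y‖^(N-α) dy ≤ C‖x‖^(α-N) for all ‖x‖ ≥ 1. -/
theorem stmt_10 (N : ℕ) (hN : 1 ≤ N) (α p γ τ s c : ℝ)
    (hα0 : 0 < α) (hαN : α < N) (hp : 0 < p) (hγ : γ < 0) (hτ : 0 ≤ τ)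
    (hs : 1 < s) (hc : 0 < c) (hpγ : α + p * γ < 0) (hpγN : (N : ℝ) < p * |γ|)
    (f : EuclideanSpace ℝ (Fin N) → ℝ)
    (hf0 : ∀ y, 0 ≤ f y)
    (hf : ∀ y : EuclideanSpace ℝ (Fin N), 1 ≤ ‖y‖ →
      f y ≤ c * ‖y‖ ^ γ * Real.log (s * ‖y‖) ^ τ) :
    ∃ C : ℝ, 0 < C ∧ ∀ x : EuclideanSpace ℝ (Fin N), 1 ≤ ‖x‖ →
      ∫⁻ y in {y : EuclideanSpace ℝ (Fin N) | 1 ≤ ‖y‖},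
          ENNReal.ofReal (f y ^ p / ‖x - y‖ ^ ((N : ℝ) - α)) ≤
        ENNReal.ofReal (C * ‖x‖ ^ (α - N)) := by
  haveI : Nonempty (Fin N) := ⟨⟨0, hN⟩⟩
  have hN1 : (1:ℝ) ≤ (N:ℝ) := by exact_mod_cast hN
  have hpγ' : p * γ < -(N:ℝ) := by
    have habs : p * |γ| = -(p * γ) := by rw [abs_of_neg hγ]; ring
    rw [habs] at hpγN; linarith
  set q1 : ℝ := (p * γ - N) / 2 with hq1def
  have hq1a : p * γ < q1 := by rw [hq1def]; linarith
  have hq1b : q1 < -(N:ℝ) := by rw [hq1def]; linarith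
  have hq1neg : q1 < 0 := by linarith
  obtain ⟨M1, hM1, hM1t⟩ := auxPow s (p * γ) (p * τ) q1 hs (by positivity) hq1a
  obtain ⟨M2, hM2, hM2t⟩ := auxPow s (p * γ) (p * τ) (-(N:ℝ)) hs (by positivity) hpγ'
  obtain ⟨D, hDt, hDb⟩ := auxBall N hN α hα0 hαN
  -- finiteness of the Japanese-bracket integral
  have hJfin : (∫⁻ y : EuclideanSpace ℝ (Fin N),
      ENNReal.ofReal ((1 + ‖y‖) ^ q1)) < ⊤ := by
    have h := finite_integral_one_add_norm
      (E := EuclideanSpace ℝ (Fin N)) (μ := volume) (r := -q1)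
      (by rw [finrank_euclideanSpace]; simp; linarith)
    simpa using h
  set J : ℝ≥0∞ := ∫⁻ y : EuclideanSpace ℝ (Fin N),
      ENNReal.ofReal ((1 + ‖y‖) ^ q1) with hJdef
  -- pointwise power bound
  have hfp : ∀ y : EuclideanSpace ℝ (Fin N), 1 ≤ ‖y‖ →
      f y ^ p ≤ c ^ p * (‖y‖ ^ (p * γ) * Real.log (s * ‖y‖) ^ (p * τ)) := by
    intro y hy
    have h0 : (0:ℝ) < ‖y‖ := lt_of_lt_of_le one_pos hy
    have hl : 0 ≤ Real.log (s * ‖y‖) := Real.log_nonneg (by nlinarith)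
    calc f y ^ p ≤ (c * ‖y‖ ^ γ * Real.log (s * ‖y‖) ^ τ) ^ p :=
          Real.rpow_le_rpow (hf0 y) (hf y hy) hp.le
      _ = c ^ p * (‖y‖ ^ (p * γ) * Real.log (s * ‖y‖) ^ (p * τ)) := by
          rw [Real.mul_rpow (by positivity) (by positivity),
            Real.mul_rpow hc.le (by positivity),
            ← Real.rpow_mul h0.le, ← Real.rpow_mul hl,
            mul_comm γ p, mul_comm τ p, mul_assoc]
  -- bracket bound
  have hbr : ∀ y : EuclideanSpace ℝ (Fin N), 1 ≤ ‖y‖ →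
      ‖y‖ ^ q1 ≤ 2 ^ (-q1) * (1 + ‖y‖) ^ q1 := by
    intro y hy
    have h0 : (0:ℝ) < ‖y‖ := lt_of_lt_of_le one_pos hy
    have h1 : (0:ℝ) < (1 + ‖y‖) / 2 := by positivity
    have h2 : (1 + ‖y‖) / 2 ≤ ‖y‖ := by linarith
    calc ‖y‖ ^ q1 ≤ ((1 + ‖y‖) / 2) ^ q1 :=
          Real.rpow_le_rpow_of_nonpos h1 h2 hq1neg.le
      _ = 2 ^ (-q1) * (1 + ‖y‖) ^ q1 := by
          rw [Real.div_rpow (by positivity) (by norm_num),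
            div_eq_mul_inv, ← Real.rpow_neg (by norm_num), mul_comm]
  have hKfar0 : (0:ℝ) < c ^ p * M1 * 2 ^ (-q1) := by positivity
  set Kfar : ℝ := c ^ p * M1 * 2 ^ (-q1) with hKfardef
  set DA : ℝ≥0∞ := ENNReal.ofReal (Kfar * 2 ^ ((N:ℝ) - α)) * J with hDAdef
  set DB : ℝ≥0∞ := ENNReal.ofReal (c ^ p * M2 * 2 ^ ((N:ℝ) - α)) * D with hDBdef
  have hDAt : DA ≠ ⊤ := ENNReal.mul_ne_top ENNReal.ofReal_ne_top hJfin.ne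
  have hDBt : DB ≠ ⊤ := ENNReal.mul_ne_top ENNReal.ofReal_ne_top hDt
  refine ⟨(DA + DB).toReal + 1, by positivity, fun x hx => ?_⟩
  have hx0 : (0:ℝ) < ‖x‖ := lt_of_lt_of_le one_pos hx
  set R : ℝ := ‖x‖ / 2 with hRdef
  have hR : 0 < R := by rw [hRdef]; positivity
  have hRpow : R ^ (α - (N:ℝ)) = 2 ^ ((N:ℝ) - α) * ‖x‖ ^ (α - (N:ℝ)) := by
    have h2 : (2:ℝ) ^ (α - (N:ℝ)) = ((2:ℝ) ^ ((N:ℝ) - α))⁻¹ := by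
      rw [← Real.rpow_neg (by norm_num), neg_sub]
    rw [hRdef, Real.div_rpow hx0.le (by norm_num), h2, div_eq_mul_inv, inv_inv, mul_comm]
  have hRcomb : R ^ (-(N:ℝ)) * R ^ α = 2 ^ ((N:ℝ) - α) * ‖x‖ ^ (α - (N:ℝ)) := by
    rw [← Real.rpow_add hR, show -(N:ℝ) + α = α - (N:ℝ) by ring, hRpow]
  set S : Set (EuclideanSpace ℝ (Fin N)) := {y | 1 ≤ ‖y‖} with hSdef
  have hSm : MeasurableSet S := measurableSet_le measurable_const measurable_norm
  set g : EuclideanSpace ℝ (Fin N) → ℝ≥0∞ :=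
    fun y => ENNReal.ofReal (f y ^ p / ‖x - y‖ ^ ((N : ℝ) - α)) with hgdef
  -- far part
  have hfar : ∫⁻ y in S \ Metric.ball x R, g y ≤
      ENNReal.ofReal (Kfar * R ^ (α - (N:ℝ))) * J := by
    have hpt : ∀ y ∈ S \ Metric.ball x R, g y ≤
        ENNReal.ofReal (Kfar * R ^ (α - (N:ℝ))) * ENNReal.ofReal ((1 + ‖y‖) ^ q1) := by
      intro y hy
      obtain ⟨hyS, hyB⟩ := hy
      have hy1 : (1:ℝ) ≤ ‖y‖ := hyS
      have hxy : R ≤ ‖x - y‖ := by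
        rw [Metric.mem_ball, dist_comm, dist_eq_norm] at hyB
        exact le_of_not_gt hyB
      have hnum : f y ^ p ≤ Kfar * (1 + ‖y‖) ^ q1 := by
        calc f y ^ p ≤ c ^ p * (‖y‖ ^ (p * γ) * Real.log (s * ‖y‖) ^ (p * τ)) := hfp y hy1
          _ ≤ c ^ p * (M1 * ‖y‖ ^ q1) :=
              mul_le_mul_of_nonneg_left (hM1t ‖y‖ hy1) (by positivity)
          _ ≤ c ^ p * (M1 * (2 ^ (-q1) * (1 + ‖y‖) ^ q1)) := by
              have := hbr y hy1
              gcongr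
          _ = Kfar * (1 + ‖y‖) ^ q1 := by rw [hKfardef]; ring
      have hden : R ^ ((N:ℝ) - α) ≤ ‖x - y‖ ^ ((N:ℝ) - α) :=
        Real.rpow_le_rpow hR.le hxy (by linarith)
      have hdiv : f y ^ p / ‖x - y‖ ^ ((N:ℝ) - α) ≤
          Kfar * (1 + ‖y‖) ^ q1 / R ^ ((N:ℝ) - α) :=
        div_le_div₀ (by positivity) hnum (Real.rpow_pos_of_pos hR _) hden
      have heq : Kfar * (1 + ‖y‖) ^ q1 / R ^ ((N:ℝ) - α) =
          (Kfar * R ^ (α - (N:ℝ))) * (1 + ‖y‖) ^ q1 := by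
        rw [div_eq_mul_inv, ← Real.rpow_neg hR.le, show -((N:ℝ) - α) = α - (N:ℝ) by ring]
        ring
      calc g y ≤ ENNReal.ofReal (Kfar * (1 + ‖y‖) ^ q1 / R ^ ((N:ℝ) - α)) :=
            ENNReal.ofReal_le_ofReal hdiv
        _ = ENNReal.ofReal (Kfar * R ^ (α - (N:ℝ))) * ENNReal.ofReal ((1 + ‖y‖) ^ q1) := by
            rw [heq, ENNReal.ofReal_mul (by positivity)]
    calc ∫⁻ y in S \ Metric.ball x R, g y
        ≤ ∫⁻ y in S \ Metric.ball x R, ENNReal.ofReal (Kfar * R ^ (α - (N:ℝ))) *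
            ENNReal.ofReal ((1 + ‖y‖) ^ q1) :=
          setLIntegral_mono' (hSm.diff measurableSet_ball) hpt
      _ = ENNReal.ofReal (Kfar * R ^ (α - (N:ℝ))) *
            ∫⁻ y in S \ Metric.ball x R, ENNReal.ofReal ((1 + ‖y‖) ^ q1) :=
          lintegral_const_mul' _ _ ENNReal.ofReal_ne_top
      _ ≤ ENNReal.ofReal (Kfar * R ^ (α - (N:ℝ))) * J := by
          gcongr
          exact setLIntegral_le_lintegral _ _
  -- near part
  have hnear : ∫⁻ y in S ∩ Metric.ball x R, g y ≤
      ENNReal.ofReal (c ^ p * M2 * R ^ (-(N:ℝ))) * (D * ENNReal.ofReal (R ^ α)) := by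
    have hpt : ∀ y ∈ S ∩ Metric.ball x R, g y ≤
        ENNReal.ofReal (c ^ p * M2 * R ^ (-(N:ℝ))) * ENNReal.ofReal (‖x - y‖ ^ (α - (N:ℝ))) := by
      intro y hy
      obtain ⟨hyS, hyB⟩ := hy
      have hy1 : (1:ℝ) ≤ ‖y‖ := hyS
      have hyB' : ‖x - y‖ < R := by
        rw [Metric.mem_ball, dist_comm, dist_eq_norm] at hyB
        exact hyB
      have hfy : f y ^ p ≤ c ^ p * M2 * R ^ (-(N:ℝ)) := by
        have hyR : R ≤ ‖y‖ := by
          have h := norm_sub_norm_le x y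
          rw [hRdef] at hyB' ⊢
          linarith
        have h2 : ‖y‖ ^ (-(N:ℝ)) ≤ R ^ (-(N:ℝ)) :=
          Real.rpow_le_rpow_of_nonpos hR hyR (by linarith)
        calc f y ^ p ≤ c ^ p * (‖y‖ ^ (p * γ) * Real.log (s * ‖y‖) ^ (p * τ)) := hfp y hy1
          _ ≤ c ^ p * (M2 * ‖y‖ ^ (-(N:ℝ))) :=
              mul_le_mul_of_nonneg_left (hM2t ‖y‖ hy1) (by positivity)
          _ ≤ c ^ p * (M2 * R ^ (-(N:ℝ))) := by gcongr
          _ = c ^ p * M2 * R ^ (-(N:ℝ)) := by ring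
      rcases eq_or_lt_of_le (norm_nonneg (x - y)) with h0 | h0
      · have : g y = 0 := by
          show ENNReal.ofReal (f y ^ p / ‖x - y‖ ^ ((N : ℝ) - α)) = 0
          rw [← h0, Real.zero_rpow (ne_of_gt (by linarith) : (N:ℝ) - α ≠ 0), div_zero,
            ENNReal.ofReal_zero]
        rw [this]
        exact zero_le
      · have heq : f y ^ p / ‖x - y‖ ^ ((N:ℝ) - α) = f y ^ p * ‖x - y‖ ^ (α - (N:ℝ)) := by
          rw [div_eq_mul_inv, ← Real.rpow_neg (norm_nonneg _),
            show -((N:ℝ) - α) = α - (N:ℝ) by ring]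
        calc g y = ENNReal.ofReal (f y ^ p * ‖x - y‖ ^ (α - (N:ℝ))) := by
              show ENNReal.ofReal (f y ^ p / ‖x - y‖ ^ ((N : ℝ) - α)) = _
              rw [heq]
          _ ≤ ENNReal.ofReal ((c ^ p * M2 * R ^ (-(N:ℝ))) * ‖x - y‖ ^ (α - (N:ℝ))) :=
              ENNReal.ofReal_le_ofReal
                (mul_le_mul_of_nonneg_right hfy (Real.rpow_nonneg (norm_nonneg _) _))
          _ = _ := ENNReal.ofReal_mul (by positivity)
    calc ∫⁻ y in S ∩ Metric.ball x R, g y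
        ≤ ∫⁻ y in S ∩ Metric.ball x R, ENNReal.ofReal (c ^ p * M2 * R ^ (-(N:ℝ))) *
            ENNReal.ofReal (‖x - y‖ ^ (α - (N:ℝ))) :=
          setLIntegral_mono' (hSm.inter measurableSet_ball) hpt
      _ = ENNReal.ofReal (c ^ p * M2 * R ^ (-(N:ℝ))) *
            ∫⁻ y in S ∩ Metric.ball x R, ENNReal.ofReal (‖x - y‖ ^ (α - (N:ℝ))) :=
          lintegral_const_mul' _ _ ENNReal.ofReal_ne_top
      _ ≤ ENNReal.ofReal (c ^ p * M2 * R ^ (-(N:ℝ))) * (D * ENNReal.ofReal (R ^ α)) := by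
          gcongr
          exact le_trans (lintegral_mono_set Set.inter_subset_right) (hDb x R hR)
  -- rewrite the two bounds
  have hfarconst : ENNReal.ofReal (Kfar * R ^ (α - (N:ℝ))) * J =
      DA * ENNReal.ofReal (‖x‖ ^ (α - (N:ℝ))) := by
    rw [hRpow, hDAdef, ← mul_assoc Kfar,
      ENNReal.ofReal_mul (mul_nonneg hKfar0.le (by positivity))]
    ring
  have hnearconst : ENNReal.ofReal (c ^ p * M2 * R ^ (-(N:ℝ))) * (D * ENNReal.ofReal (R ^ α)) =
      DB * ENNReal.ofReal (‖x‖ ^ (α - (N:ℝ))) := by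
    have h5 : ENNReal.ofReal (R ^ (-(N:ℝ))) * ENNReal.ofReal (R ^ α) =
        ENNReal.ofReal ((2:ℝ) ^ ((N:ℝ) - α)) * ENNReal.ofReal (‖x‖ ^ (α - (N:ℝ))) := by
      rw [← ENNReal.ofReal_mul (by positivity), hRcomb,
        ENNReal.ofReal_mul (by positivity)]
    rw [hDBdef, ENNReal.ofReal_mul (by positivity : (0:ℝ) ≤ c ^ p * M2),
      ENNReal.ofReal_mul (by positivity : (0:ℝ) ≤ c ^ p * M2)]
    calc ENNReal.ofReal (c ^ p * M2) * ENNReal.ofReal (R ^ (-(N:ℝ))) *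
          (D * ENNReal.ofReal (R ^ α))
        = ENNReal.ofReal (c ^ p * M2) * D *
          (ENNReal.ofReal (R ^ (-(N:ℝ))) * ENNReal.ofReal (R ^ α)) := by ring
      _ = ENNReal.ofReal (c ^ p * M2) * D *
          (ENNReal.ofReal ((2:ℝ) ^ ((N:ℝ) - α)) * ENNReal.ofReal (‖x‖ ^ (α - (N:ℝ)))) := by
          rw [h5]
      _ = ENNReal.ofReal (c ^ p * M2) * ENNReal.ofReal ((2:ℝ) ^ ((N:ℝ) - α)) * D *
          ENNReal.ofReal (‖x‖ ^ (α - (N:ℝ))) := by ring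
  -- final assembly
  show ∫⁻ y in S, g y ≤ _
  have hsplit : ∫⁻ y in S, g y ≤
      (∫⁻ y in S \ Metric.ball x R, g y) + ∫⁻ y in S ∩ Metric.ball x R, g y := by
    have h := lintegral_union_le (μ := volume) g (S \ Metric.ball x R) (S ∩ Metric.ball x R)
    rwa [Set.diff_union_inter] at h
  calc ∫⁻ y in S, g y ≤
      (∫⁻ y in S \ Metric.ball x R, g y) + ∫⁻ y in S ∩ Metric.ball x R, g y := hsplit
    _ ≤ DA * ENNReal.ofReal (‖x‖ ^ (α - (N:ℝ))) + DB * ENNReal.ofReal (‖x‖ ^ (α - (N:ℝ))) := by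
        refine add_le_add ?_ ?_
        · rw [← hfarconst]; exact hfar
        · rw [← hnearconst]; exact hnear
    _ = (DA + DB) * ENNReal.ofReal (‖x‖ ^ (α - (N:ℝ))) := (add_mul _ _ _).symm
    _ ≤ ENNReal.ofReal (((DA + DB).toReal + 1) * ‖x‖ ^ (α - (N:ℝ))) := by
        rw [ENNReal.ofReal_mul (by positivity)]
        gcongr
        calc DA + DB = ENNReal.ofReal ((DA + DB).toReal) :=
              (ENNReal.ofReal_toReal (by simp [ENNReal.add_ne_top, hDAt, hDBt])).symm
          _ ≤ ENNReal.ofReal ((DA + DB).toReal + 1) :=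
              ENNReal.ofReal_le_ofReal (by linarith [ENNReal.toReal_nonneg (a := DA + DB)])
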